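/- Let V, W be subspaces of ℝ^d and define R = span(W ∪ V^⊥) ∩ W^⊥. Then the identity decomposes as I = P_R + P_W + P_{W^⊥ ∩ V}; that is, W, R, and W^⊥ ∩ V are pairwise orthogonal subspaces whose direct sum is ℝ^d. -/

import Mathlib

open RealInnerProductSpace


theorem subspace_partition {d : ℕ} (V W : Submodule ℝ (EuclideanSpace ℝ (Fin d)))
    (R : Submodule ℝ (EuclideanSpace ℝ (Fin d))) (hR : R = (W ⊔ Vᗮ) ⊓ Wᗮ) :
    ∀ x : EuclideanSpace ℝ (Fin d),
      (Submodule.orthogonalProjectionOnto R x : EuclideanSpace ℝ (Fin d)) +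
      (Submodule.orthogonalProjectionOnto W x : EuclideanSpace ℝ (Fin d)) +
      (Submodule.orthogonalProjectionOnto (Wᗮ ⊓ V) x : EuclideanSpace ℝ (Fin d)) = x := by
  intro x
  set U : Submodule ℝ (EuclideanSpace ℝ (Fin d)) := W ⊔ Vᗮ with hU
  have hRle : R ≤ Wᗮ := hR ▸ inf_le_right
  have hUorth : Uᗮ = Wᗮ ⊓ V := by
    rw [hU, ← Submodule.inf_orthogonal, Submodule.orthogonal_orthogonal]
  have hWR : W ⊔ R = U := by
    rw [hR, inf_comm]
    exact Submodule.sup_orthogonal_inf_of_hasOrthogonalProjection le_sup_left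
  -- projection onto U is the sum of projections onto W and R
  have hsum : (Submodule.orthogonalProjectionOnto U x : EuclideanSpace ℝ (Fin d)) =
      (Submodule.orthogonalProjectionOnto R x : EuclideanSpace ℝ (Fin d)) +
      (Submodule.orthogonalProjectionOnto W x : EuclideanSpace ℝ (Fin d)) := by
    apply Submodule.eq_starProjection_of_mem_of_inner_eq_zero
    · exact Submodule.add_mem _ ((hWR ▸ le_sup_right : R ≤ U) (Submodule.orthogonalProjectionOnto R x).2)
        ((hWR ▸ le_sup_left : W ≤ U) (Submodule.orthogonalProjectionOnto W x).2)
    · intro w hw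
      rw [← hWR] at hw
      rcases Submodule.mem_sup.1 hw with ⟨a, ha, b, hb, rfl⟩
      have h1 : ⟪x - (Submodule.orthogonalProjectionOnto W x : EuclideanSpace ℝ (Fin d)), a⟫ = 0 :=
        Submodule.starProjection_inner_eq_zero x a ha
      have h2 : ⟪x - (Submodule.orthogonalProjectionOnto R x : EuclideanSpace ℝ (Fin d)), b⟫ = 0 :=
        Submodule.starProjection_inner_eq_zero x b hb
      have h3 : ⟪(Submodule.orthogonalProjectionOnto R x : EuclideanSpace ℝ (Fin d)), a⟫ = 0 := by
        rw [real_inner_comm]; exact (hRle (Submodule.orthogonalProjectionOnto R x).2) a ha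
      have h4 : ⟪(Submodule.orthogonalProjectionOnto W x : EuclideanSpace ℝ (Fin d)), b⟫ = 0 :=
        (hRle hb) _ (Submodule.orthogonalProjectionOnto W x).2
      have := congrArg₂ (· + ·) (congrArg₂ (· + ·) h1 h2) (congrArg₂ (· + ·) h3 h4)
      simp only [inner_sub_left, inner_add_left, inner_add_right] at *
      linarith
  have hproj : (Submodule.orthogonalProjectionOnto (Wᗮ ⊓ V) x : EuclideanSpace ℝ (Fin d)) =
      x - (Submodule.orthogonalProjectionOnto U x : EuclideanSpace ℝ (Fin d)) := by
    apply Submodule.eq_starProjection_of_mem_orthogonal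
    · rw [← hUorth]; exact Submodule.sub_starProjection_mem_orthogonal x
    · have h5 : (Wᗮ ⊓ V)ᗮ = U := by rw [← hUorth, Submodule.orthogonal_orthogonal]
      rw [h5]
      simp only [sub_sub_cancel]
      exact (Submodule.orthogonalProjectionOnto U x).2
  rw [hproj, hsum]
  abel
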